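/- For every n ≥ 1, the closed triangle with vertices 0, n·u(0), n·u(1) is the union of the T_n = n(n+1)/2 upward unit tiles Δ(i,j) (i + j ≤ n − 1) and the T_{n−1} = n(n−1)/2 downward unit tiles ∇(i,j) with vertices P(i+1,j), P(i,j+1), P(i+1,j+1) (i + j ≤ n − 2), and these n² tiles have pairwise disjoint interiors. In particular the order-n generator pattern consists of n² = T_n + T_{n−1} coincident subtriangles, T_n of which face upward (dark) and T_{n−1} of which face downward (white). -/

import Mathlib

/-- The unit vector in direction `d·π/3`, viewing the plane as `ℂ`. -/
noncomputable def dirU (d : Fin 6) : ℂ :=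
  Complex.exp ((d : ℕ) * Real.pi / 3 * Complex.I)
/-- The grid point `P(i,j) = i·u(0) + j·u(1)`. -/
noncomputable def Pt (i j : ℕ) : ℂ := (i : ℂ) * dirU 0 + (j : ℂ) * dirU 1

/-- The triangular number `T_n = n(n+1)/2`. -/
def triNum (n : ℕ) : ℕ := n * (n + 1) / 2

/-- The closed upward unit tile `Δ(i,j)` with vertices `P(i,j)`, `P(i+1,j)`, `P(i,j+1)`. -/
noncomputable def upTile (i j : ℕ) : Set ℂ :=
  convexHull ℝ {Pt i j, Pt (i + 1) j, Pt i (j + 1)}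

/-- The closed downward unit tile `∇(i,j)` with vertices `P(i+1,j)`, `P(i,j+1)`, `P(i+1,j+1)`. -/
noncomputable def downTile (i j : ℕ) : Set ℂ :=
  convexHull ℝ {Pt (i + 1) j, Pt i (j + 1), Pt (i + 1) (j + 1)}

/-- The closed triangle with vertices `0`, `n·u(0)`, `n·u(1)`. -/
noncomputable def bigTri (n : ℕ) : Set ℂ :=
  convexHull ℝ {0, (n : ℂ) * dirU 0, (n : ℂ) * dirU 1}

lemma dirU_zero : dirU 0 = 1 := by
  simp [dirU]

lemma dirU_one : dirU 1 = Complex.I * (Real.sqrt 3 / 2 : ℝ) + (1/2 : ℝ) := by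
  have h : ((1 : Fin 6) : ℕ) = 1 := rfl
  rw [dirU, h]
  push_cast
  rw [show (1 : ℂ) * Real.pi / 3 * Complex.I = (Real.pi/3 : ℝ) * Complex.I by push_cast; ring,
    Complex.exp_mul_I]
  rw [← Complex.ofReal_cos, ← Complex.ofReal_sin]
  rw [Real.cos_pi_div_three, Real.sin_pi_div_three]
  push_cast
  ring

lemma dirU_one_re : (dirU 1).re = 1/2 := by simp [dirU_one]
lemma dirU_one_im : (dirU 1).im = Real.sqrt 3 / 2 := by simp [dirU_one]

lemma sqrt3_pos : (0:ℝ) < Real.sqrt 3 := Real.sqrt_pos.mpr (by norm_num)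
lemma sqrt3_ne : (Real.sqrt 3) ≠ 0 := ne_of_gt sqrt3_pos
lemma sq_sqrt3 : Real.sqrt 3 * Real.sqrt 3 = 3 := Real.mul_self_sqrt (by norm_num)

/-- first coordinate in the (u0, u1) basis -/
noncomputable def Aco (z : ℂ) : ℝ := z.re - z.im / Real.sqrt 3
/-- second coordinate in the (u0, u1) basis -/
noncomputable def Bco (z : ℂ) : ℝ := 2 * z.im / Real.sqrt 3

/-- the point with coordinates (a, b) -/
noncomputable def Lpt (a b : ℝ) : ℂ := (a : ℂ) + (b : ℂ) * dirU 1

lemma Aco_L (a b : ℝ) : Aco (Lpt a b) = a := by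
  simp [Aco, Lpt, dirU_one_re, dirU_one_im]
  field_simp
  ring
lemma Bco_L (a b : ℝ) : Bco (Lpt a b) = b := by
  simp [Bco, Lpt, dirU_one_im]
  field_simp

lemma L_coords (z : ℂ) : Lpt (Aco z) (Bco z) = z := by
  apply Complex.ext
  · simp [Lpt, Aco, Bco, dirU_one_re, dirU_one_im]; field_simp; ring
  · simp [Lpt, Aco, Bco, dirU_one_re, dirU_one_im]
    field_simp

lemma Aco_linear : IsLinearMap ℝ Aco := by
  constructor
  · intro x y; simp [Aco]; ring
  · intro c x
    simp only [Aco, Complex.real_smul, Complex.mul_re, Complex.mul_im, Complex.ofReal_re,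
      Complex.ofReal_im, smul_eq_mul]
    ring

lemma Bco_linear : IsLinearMap ℝ Bco := by
  constructor
  · intro x y; simp [Bco]; ring
  · intro c x
    simp only [Bco, Complex.real_smul, Complex.mul_re, Complex.mul_im, Complex.ofReal_re,
      Complex.ofReal_im, smul_eq_mul]
    ring

lemma Cco_linear : IsLinearMap ℝ (fun z => Aco z + Bco z) :=
  ⟨fun x y => by rw [Aco_linear.map_add, Bco_linear.map_add]; ring,
   fun c x => by rw [Aco_linear.map_smul, Bco_linear.map_smul]; simp; ring⟩

lemma Aco_cont : Continuous Aco := by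
  unfold Aco; fun_prop
lemma Bco_cont : Continuous Bco := by
  unfold Bco; fun_prop

lemma Aco_sub (x y : ℂ) : Aco (x - y) = Aco x - Aco y := by simp [Aco]; ring
lemma Bco_sub (x y : ℂ) : Bco (x - y) = Bco x - Bco y := by simp [Bco]; ring
lemma Aco_add (x y : ℂ) : Aco (x + y) = Aco x + Aco y := Aco_linear.map_add x y
lemma Bco_add (x y : ℂ) : Bco (x + y) = Bco x + Bco y := Bco_linear.map_add x y

lemma Aco_one : Aco 1 = 1 := by simp [Aco]
lemma Bco_one : Bco 1 = 0 := by simp [Bco]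
lemma Aco_u1 : Aco (dirU 1) = 0 := by
  simp [Aco, dirU_one_re, dirU_one_im]
  field_simp
  norm_num
lemma Bco_u1 : Bco (dirU 1) = 1 := by
  simp [Bco, dirU_one_im]
  field_simp

lemma norm_u1 : ‖dirU 1‖ = 1 := by
  rw [Complex.norm_def, Complex.normSq_apply, dirU_one_re, dirU_one_im]
  rw [show 1/2 * (1/2) + Real.sqrt 3 / 2 * (Real.sqrt 3 / 2) = 1 by
    have := sq_sqrt3; nlinarith]
  exact Real.sqrt_one

lemma combo_mem_hull {v0 v1 v2 : ℂ} {w0 w1 w2 : ℝ} (h0 : 0 ≤ w0) (h1 : 0 ≤ w1)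
    (h2 : 0 ≤ w2) (hs : w0 + w1 + w2 = 1) :
    w0 • v0 + w1 • v1 + w2 • v2 ∈ convexHull ℝ {v0, v1, v2} := by
  have hw : ∀ i ∈ (Finset.univ : Finset (Fin 3)), 0 ≤ ![w0, w1, w2] i := by
    intro i _; fin_cases i <;> simpa
  have hz : ∀ i ∈ (Finset.univ : Finset (Fin 3)), ![v0, v1, v2] i ∈ ({v0, v1, v2} : Set ℂ) := by
    intro i _; fin_cases i <;> simp
  have := Finset.centerMass_mem_convexHull (Finset.univ : Finset (Fin 3)) hw
    (by rw [Fin.sum_univ_three]; simp; linarith) hz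
  rwa [Finset.centerMass, Fin.sum_univ_three, Fin.sum_univ_three,
    show ![w0,w1,w2] 0 = w0 from rfl, show ![w0,w1,w2] 1 = w1 from rfl,
    show ![w0,w1,w2] 2 = w2 from rfl,
    show ![v0,v1,v2] 0 = v0 from rfl, show ![v0,v1,v2] 1 = v1 from rfl,
    show ![v0,v1,v2] 2 = v2 from rfl, hs, inv_one, one_smul] at this

lemma hull_up (a0 b0 r : ℝ) (hr : 0 < r) :
    convexHull ℝ {Lpt a0 b0, Lpt (a0+r) b0, Lpt a0 (b0+r)} =
    {z : ℂ | a0 ≤ Aco z ∧ b0 ≤ Bco z ∧ Aco z + Bco z ≤ a0 + b0 + r} := by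
  apply Set.Subset.antisymm
  · apply convexHull_min
    · rintro z (rfl | rfl | rfl) <;>
        simp only [Set.mem_setOf_eq, Aco_L, Bco_L] <;>
        refine ⟨by linarith, by linarith, by linarith⟩
    · exact (convex_halfSpace_ge Aco_linear a0).inter
        ((convex_halfSpace_ge Bco_linear b0).inter
        (convex_halfSpace_le Cco_linear (a0+b0+r)))
  · rintro z ⟨ha, hb, hc⟩
    set a := Aco z; set b := Bco z
    have key : (1 - (a-a0)/r - (b-b0)/r) • Lpt a0 b0 + ((a-a0)/r) • Lpt (a0+r) b0
        + ((b-b0)/r) • Lpt a0 (b0+r) = z := by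
      conv_rhs => rw [← L_coords z]
      simp only [Lpt, Complex.real_smul]
      push_cast
      have : (r:ℂ) ≠ 0 := by exact_mod_cast hr.ne'
      field_simp
      ring
    rw [← key]
    apply combo_mem_hull
    · have h1 : (a-a0)/r ≤ (a-a0)/r := le_refl _
      have : (a-a0)/r + (b-b0)/r ≤ 1 := by
        rw [← add_div, div_le_one hr]; linarith
      linarith
    · exact div_nonneg (by linarith) hr.le
    · exact div_nonneg (by linarith) hr.le
    · ring

lemma hull_down (a0 b0 : ℝ) :
    convexHull ℝ {Lpt (a0+1) b0, Lpt a0 (b0+1), Lpt (a0+1) (b0+1)} =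
    {z : ℂ | Aco z ≤ a0 + 1 ∧ Bco z ≤ b0 + 1 ∧ a0 + b0 + 1 ≤ Aco z + Bco z} := by
  apply Set.Subset.antisymm
  · apply convexHull_min
    · rintro z (rfl | rfl | rfl) <;>
        simp only [Set.mem_setOf_eq, Aco_L, Bco_L] <;>
        refine ⟨by linarith, by linarith, by linarith⟩
    · exact (convex_halfSpace_le Aco_linear (a0+1)).inter
        ((convex_halfSpace_le Bco_linear (b0+1)).inter
        (convex_halfSpace_ge Cco_linear (a0+b0+1)))
  · rintro z ⟨ha, hb, hc⟩
    set a := Aco z; set b := Bco z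
    have key : (1 - (b-b0)) • Lpt (a0+1) b0 + (1 - (a-a0)) • Lpt a0 (b0+1)
        + ((a-a0)+(b-b0)-1) • Lpt (a0+1) (b0+1) = z := by
      conv_rhs => rw [← L_coords z]
      simp only [Lpt, Complex.real_smul]
      push_cast
      ring
    rw [← key]
    apply combo_mem_hull
    · linarith
    · linarith
    · linarith
    · ring

lemma interior_up_set (a0 b0 c : ℝ) :
    interior {z : ℂ | a0 ≤ Aco z ∧ b0 ≤ Bco z ∧ Aco z + Bco z ≤ c} =
    {z : ℂ | a0 < Aco z ∧ b0 < Bco z ∧ Aco z + Bco z < c} := by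
  apply Set.Subset.antisymm
  · intro z hz
    rw [mem_interior_iff_mem_nhds, Metric.mem_nhds_iff] at hz
    obtain ⟨ε, hε, hball⟩ := hz
    have hmem : ∀ w : ℂ, ‖w‖ = 1 → z + (ε/2) • w ∈
        {z : ℂ | a0 ≤ Aco z ∧ b0 ≤ Bco z ∧ Aco z + Bco z ≤ c} := by
      intro w hw
      apply hball
      rw [Metric.mem_ball, dist_eq_norm]
      simp only [add_sub_cancel_left, norm_smul, hw, mul_one, Real.norm_eq_abs]
      rw [abs_of_pos (by linarith)]; linarith
    have h1 := hmem (-1) (by simp)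
    have h2 := hmem (-(dirU 1)) (by rw [norm_neg]; exact norm_u1)
    have h3 := hmem 1 (by simp)
    simp only [Set.mem_setOf_eq, smul_neg, ← sub_eq_add_neg, Aco_sub, Bco_sub,
      Aco_add, Bco_add] at h1 h2 h3
    have e1 : Aco ((ε/2) • (1:ℂ)) = ε/2 := by
      rw [Aco_linear.map_smul]; simp [Aco_one]
    have e2 : Bco ((ε/2) • (1:ℂ)) = 0 := by
      rw [Bco_linear.map_smul]; simp [Bco_one]
    have e3 : Aco ((ε/2) • dirU 1) = 0 := by
      rw [Aco_linear.map_smul]; simp [Aco_u1]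
    have e4 : Bco ((ε/2) • dirU 1) = ε/2 := by
      rw [Bco_linear.map_smul]; simp [Bco_u1]
    rw [e1, e2] at h1 h3
    rw [e3, e4] at h2
    refine ⟨by linarith [h1.1], by linarith [h2.2.1], by linarith [h3.2.2]⟩
  · apply interior_maximal
    · intro z hz; exact ⟨hz.1.le, hz.2.1.le, hz.2.2.le⟩
    · exact (isOpen_lt continuous_const Aco_cont).inter
        ((isOpen_lt continuous_const Bco_cont).inter
        (isOpen_lt (Aco_cont.add Bco_cont) continuous_const))

lemma interior_down_set (a0 b0 c : ℝ) :
    interior {z : ℂ | Aco z ≤ a0 ∧ Bco z ≤ b0 ∧ c ≤ Aco z + Bco z} =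
    {z : ℂ | Aco z < a0 ∧ Bco z < b0 ∧ c < Aco z + Bco z} := by
  apply Set.Subset.antisymm
  · intro z hz
    rw [mem_interior_iff_mem_nhds, Metric.mem_nhds_iff] at hz
    obtain ⟨ε, hε, hball⟩ := hz
    have hmem : ∀ w : ℂ, ‖w‖ = 1 → z + (ε/2) • w ∈
        {z : ℂ | Aco z ≤ a0 ∧ Bco z ≤ b0 ∧ c ≤ Aco z + Bco z} := by
      intro w hw
      apply hball
      rw [Metric.mem_ball, dist_eq_norm]
      simp only [add_sub_cancel_left, norm_smul, hw, mul_one, Real.norm_eq_abs]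
      rw [abs_of_pos (by linarith)]; linarith
    have h1 := hmem 1 (by simp)
    have h2 := hmem (dirU 1) norm_u1
    have h3 := hmem (-1) (by simp)
    simp only [Set.mem_setOf_eq, smul_neg, ← sub_eq_add_neg, Aco_sub, Bco_sub,
      Aco_add, Bco_add] at h1 h2 h3
    have e1 : Aco ((ε/2) • (1:ℂ)) = ε/2 := by
      rw [Aco_linear.map_smul]; simp [Aco_one]
    have e2 : Bco ((ε/2) • (1:ℂ)) = 0 := by
      rw [Bco_linear.map_smul]; simp [Bco_one]
    have e3 : Aco ((ε/2) • dirU 1) = 0 := by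
      rw [Aco_linear.map_smul]; simp [Aco_u1]
    have e4 : Bco ((ε/2) • dirU 1) = ε/2 := by
      rw [Bco_linear.map_smul]; simp [Bco_u1]
    rw [e1, e2] at h1 h3
    rw [e3, e4] at h2
    refine ⟨by linarith [h1.1], by linarith [h2.2.1], by linarith [h3.2.2]⟩
  · apply interior_maximal
    · intro z hz; exact ⟨hz.1.le, hz.2.1.le, hz.2.2.le⟩
    · exact (isOpen_lt Aco_cont continuous_const).inter
        ((isOpen_lt Bco_cont continuous_const).inter
        (isOpen_lt continuous_const (Aco_cont.add Bco_cont)))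

lemma Pt_eq_L (i j : ℕ) : Pt i j = Lpt i j := by
  simp [Pt, Lpt, dirU_zero]

lemma upTile_eq (i j : ℕ) : upTile i j =
    {z : ℂ | (i:ℝ) ≤ Aco z ∧ (j:ℝ) ≤ Bco z ∧ Aco z + Bco z ≤ (i:ℝ) + j + 1} := by
  rw [upTile, Pt_eq_L, Pt_eq_L, Pt_eq_L,
    show ((i+1 : ℕ) : ℝ) = (i:ℝ) + 1 by push_cast; ring,
    show ((j+1 : ℕ) : ℝ) = (j:ℝ) + 1 by push_cast; ring,
    hull_up i j 1 one_pos]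

lemma downTile_eq (i j : ℕ) : downTile i j =
    {z : ℂ | Aco z ≤ (i:ℝ) + 1 ∧ Bco z ≤ (j:ℝ) + 1 ∧ (i:ℝ) + j + 1 ≤ Aco z + Bco z} := by
  rw [downTile, Pt_eq_L, Pt_eq_L, Pt_eq_L,
    show ((i+1 : ℕ) : ℝ) = (i:ℝ) + 1 by push_cast; ring,
    show ((j+1 : ℕ) : ℝ) = (j:ℝ) + 1 by push_cast; ring,
    hull_down i j]

lemma bigTri_eq (n : ℕ) (hn : 1 ≤ n) : bigTri n =
    {z : ℂ | 0 ≤ Aco z ∧ 0 ≤ Bco z ∧ Aco z + Bco z ≤ (n:ℝ)} := by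
  have h0 : (0 : ℂ) = Lpt 0 0 := by simp [Lpt]
  have h1 : (n : ℂ) * dirU 0 = Lpt (0 + n) 0 := by simp [Lpt, dirU_zero]
  have h2 : (n : ℂ) * dirU 1 = Lpt 0 (0 + n) := by simp [Lpt]
  rw [bigTri, h0, h1, h2, hull_up 0 0 n (by exact_mod_cast hn)]
  norm_num

lemma interior_upTile (i j : ℕ) : interior (upTile i j) =
    {z : ℂ | (i:ℝ) < Aco z ∧ (j:ℝ) < Bco z ∧ Aco z + Bco z < (i:ℝ) + j + 1} := by
  rw [upTile_eq, interior_up_set]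

lemma interior_downTile (i j : ℕ) : interior (downTile i j) =
    {z : ℂ | Aco z < (i:ℝ) + 1 ∧ Bco z < (j:ℝ) + 1 ∧ (i:ℝ) + j + 1 < Aco z + Bco z} := by
  rw [downTile_eq, interior_down_set]

lemma nat_sandwich {i k : ℕ} {a : ℝ} (h1 : (i:ℝ) < a) (h2 : a < (i:ℝ)+1)
    (h3 : (k:ℝ) < a) (h4 : a < (k:ℝ)+1) : i = k := by
  have hik : (i:ℝ) < (k:ℝ)+1 := h1.trans h4
  have hki : (k:ℝ) < (i:ℝ)+1 := h3.trans h2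
  have hik' : i < k+1 := by exact_mod_cast hik
  have hki' : k < i+1 := by exact_mod_cast hki
  omega

lemma triNum_succ (n : ℕ) : triNum (n+1) = triNum n + (n+1) := by
  unfold triNum
  rw [show (n+1)*(n+1+1) = n*(n+1) + (n+1)*2 by ring, Nat.add_mul_div_right _ _ two_pos]

lemma tri_id (m : ℕ) : (m+1)^2 = triNum (m+1) + triNum m := by
  induction m with
  | zero => decide
  | succ k ih =>
    have h1 := triNum_succ (k+1)
    have h2 := triNum_succ k
    have h3 : (k+1+1)^2 = (k+1)^2 + (2*k+3) := by ring
    omega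


/-- For every `n ≥ 1`, the closed triangle with vertices `0`, `n·u(0)`,
`n·u(1)` is the union of the `T_n` upward tiles `Δ(i,j)` (`i + j ≤ n - 1`) and the
`T_{n-1}` downward tiles `∇(i,j)` (`i + j ≤ n - 2`), these `n²` tiles have pairwise
disjoint interiors, and `n² = T_n + T_{n-1}`. -/
theorem bigTri_eq_union_tiles (n : ℕ) (hn : 1 ≤ n) :
    (bigTri n =
      (⋃ p ∈ {q : ℕ × ℕ | q.1 + q.2 + 1 ≤ n}, upTile p.1 p.2) ∪
      (⋃ p ∈ {q : ℕ × ℕ | q.1 + q.2 + 2 ≤ n}, downTile p.1 p.2)) ∧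
    (∀ p q : ℕ × ℕ, p.1 + p.2 + 1 ≤ n → q.1 + q.2 + 1 ≤ n → p ≠ q →
      interior (upTile p.1 p.2) ∩ interior (upTile q.1 q.2) = ∅) ∧
    (∀ p q : ℕ × ℕ, p.1 + p.2 + 1 ≤ n → q.1 + q.2 + 2 ≤ n →
      interior (upTile p.1 p.2) ∩ interior (downTile q.1 q.2) = ∅) ∧
    (∀ p q : ℕ × ℕ, p.1 + p.2 + 2 ≤ n → q.1 + q.2 + 2 ≤ n → p ≠ q →
      interior (downTile p.1 p.2) ∩ interior (downTile q.1 q.2) = ∅) ∧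
    n ^ 2 = triNum n + triNum (n - 1) := by
  refine ⟨?_, ?_, ?_, ?_, ?_⟩
  · -- union
    ext z
    rw [bigTri_eq n hn]
    simp only [Set.mem_union, Set.mem_iUnion, Set.mem_setOf_eq, exists_prop]
    constructor
    · rintro ⟨ha, hb, hc⟩
      set i := ⌊Aco z⌋₊ with hi
      set j := ⌊Bco z⌋₊ with hj
      have hia : (i:ℝ) ≤ Aco z := Nat.floor_le ha
      have hai : Aco z < (i:ℝ) + 1 := Nat.lt_floor_add_one _
      have hjb : (j:ℝ) ≤ Bco z := Nat.floor_le hb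
      have hbj : Bco z < (j:ℝ) + 1 := Nat.lt_floor_add_one _
      by_cases hcase : Aco z + Bco z ≤ (i:ℝ) + j + 1
      · by_cases hle : i + j + 1 ≤ n
        · exact Or.inl ⟨(i, j), hle, by rw [upTile_eq]; exact ⟨hia, hjb, hcase⟩⟩
        · have hij : i + j ≤ n := by
            have : (i:ℝ) + j ≤ (n:ℝ) := by linarith
            exact_mod_cast this
          have heq : i + j = n := by omega
          have hc' : Aco z + Bco z ≤ (i:ℝ) + j := by
            have : ((i + j : ℕ) : ℝ) = (n : ℝ) := by exact_mod_cast heq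
            push_cast at this
            linarith
          rcases Nat.eq_zero_or_pos j with hj0 | hj1
          · have hi1 : 1 ≤ i := by omega
            refine Or.inl ⟨(i - 1, 0), by omega, ?_⟩
            rw [upTile_eq]
            have hcast : ((i - 1 : ℕ) : ℝ) = (i:ℝ) - 1 := by
              push_cast [Nat.cast_sub hi1]; ring
            refine ⟨?_, by simpa using hb, ?_⟩
            · rw [hcast]; linarith
            · rw [hcast]
              have : (j:ℝ) = 0 := by rw [hj0]; simp
              push_cast
              linarith
          · refine Or.inl ⟨(i, j - 1), by omega, ?_⟩
            rw [upTile_eq]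
            have hcast : ((j - 1 : ℕ) : ℝ) = (j:ℝ) - 1 := by
              push_cast [Nat.cast_sub hj1]; ring
            refine ⟨hia, ?_, ?_⟩
            · rw [hcast]; linarith
            · rw [hcast]; linarith
      · push_neg at hcase
        have hlt : i + j + 1 < n := by
          have : (i:ℝ) + j + 1 < (n:ℝ) := by linarith
          exact_mod_cast this
        refine Or.inr ⟨(i, j), by omega, ?_⟩
        rw [downTile_eq]
        exact ⟨hai.le, hbj.le, hcase.le⟩
    · rintro (⟨p, hp, hz⟩ | ⟨p, hp, hz⟩)
      · rw [upTile_eq] at hz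
        obtain ⟨h1, h2, h3⟩ := hz
        have hpn : (p.1:ℝ) + p.2 + 1 ≤ (n:ℝ) := by exact_mod_cast hp
        refine ⟨?_, ?_, by linarith⟩
        · exact le_trans (by positivity) h1
        · exact le_trans (by positivity) h2
      · rw [downTile_eq] at hz
        obtain ⟨h1, h2, h3⟩ := hz
        have hpn : (p.1:ℝ) + p.2 + 2 ≤ (n:ℝ) := by exact_mod_cast hp
        have hp1 : (0:ℝ) ≤ p.1 := by positivity
        have hp2 : (0:ℝ) ≤ p.2 := by positivity
        exact ⟨by linarith, by linarith, by linarith⟩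
  · -- up-up
    intro p q hp hq hne
    rw [interior_upTile, interior_upTile]
    ext z
    simp only [Set.mem_inter_iff, Set.mem_setOf_eq, Set.mem_empty_iff_false, iff_false]
    rintro ⟨⟨h1, h2, h3⟩, ⟨h4, h5, h6⟩⟩
    exact absurd (Prod.ext (nat_sandwich h1 (by linarith) h4 (by linarith))
      (nat_sandwich h2 (by linarith) h5 (by linarith))) hne
  · -- up-down
    intro p q hp hq
    rw [interior_upTile, interior_downTile]
    ext z
    simp only [Set.mem_inter_iff, Set.mem_setOf_eq, Set.mem_empty_iff_false, iff_false]
    rintro ⟨⟨h1, h2, h3⟩, ⟨h4, h5, h6⟩⟩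
    have e1 : p.1 = q.1 := nat_sandwich h1 (by linarith) (by linarith) h4
    have e2 : p.2 = q.2 := nat_sandwich h2 (by linarith) (by linarith) h5
    have e1' : (p.1:ℝ) = q.1 := by exact_mod_cast e1
    have e2' : (p.2:ℝ) = q.2 := by exact_mod_cast e2
    linarith
  · -- down-down
    intro p q hp hq hne
    rw [interior_downTile, interior_downTile]
    ext z
    simp only [Set.mem_inter_iff, Set.mem_setOf_eq, Set.mem_empty_iff_false, iff_false]
    rintro ⟨⟨h1, h2, h3⟩, ⟨h4, h5, h6⟩⟩
    exact absurd (Prod.ext (nat_sandwich (by linarith) h1 (by linarith) h4)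
      (nat_sandwich (by linarith) h2 (by linarith) h5)) hne
  · obtain ⟨m, rfl⟩ := Nat.exists_eq_add_of_le hn
    simpa [add_comm] using tri_id m
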